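/- (Total variation comparison between the triple chain and the action–context chain.) Let Π₀ be a stationary distribution of P₀ (a PMF on X with Σ_x Π₀(x)·P₀(y|x) = Π₀(y) for all y), and define Π₁(a,x) := Σ_{y∈X} Π₀(y)·π(a|y)·P(x|y,a) on A×X and Π₂(x,a,x') := Π₀(x)·π(a|x)·P(x'|x,a) on X×A×X. Then for every integer h ≥ 1 and every triple (x,a,y) ∈ X×A×X: d_TV( P₂^{h+1}(·|(x,a,y)), Π₂ ) ≤ d_TV( P₁^{h}(·|(a,y)), Π₁ ). -/
import Mathlib


open Finset

/-- Total variation distance between two mass functions on a finite type. -/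
noncomputable def dTV {Z : Type*} [Fintype Z] (u v : Z → ℝ) : ℝ :=
  (1 / 2) * ∑ z, |u z - v z|

/-- **Total variation comparison between the triple chain and the action–context chain.**
`pol x a` is the policy probability `π(a|x)`, `P x a y` the context transition
probability `P(y|x,a)`; `P₀(y|x) = Σ_a π(a|x)·P(y|x,a)`;
`P1 (a,x) (b,y) = π(b|x)·P(y|x,b)`;
`P2 (x,a,x') (y,b,y') = 1{y = x'}·π(b|y)·P(y'|y,b)`.
`Pi0` is a stationary distribution of `P₀`, and `Pi1`, `Pi2` are built from it. -/
theorem dTV_triple_vs_action_context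
    {X A : Type*} [Fintype X] [Fintype A] [DecidableEq X] [DecidableEq A]
    (pol : X → A → ℝ) (hpol : ∀ x, (∀ a, 0 ≤ pol x a) ∧ ∑ a, pol x a = 1)
    (P : X → A → X → ℝ) (hP : ∀ x a, (∀ y, 0 ≤ P x a y) ∧ ∑ y, P x a y = 1)
    (Pi0 : X → ℝ) (hPi0 : (∀ x, 0 ≤ Pi0 x) ∧ ∑ x, Pi0 x = 1)
    (hstat : ∀ y, ∑ x, Pi0 x * (∑ a, pol x a * P x a y) = Pi0 y)
    (P1 : Matrix (A × X) (A × X) ℝ)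
    (hP1 : ∀ (a : A) (x : X) (b : A) (y : X), P1 (a, x) (b, y) = pol x b * P x b y)
    (P2 : Matrix (X × A × X) (X × A × X) ℝ)
    (hP2 : ∀ (x : X) (a : A) (x' : X) (y : X) (b : A) (y' : X),
      P2 (x, a, x') (y, b, y') = if y = x' then pol y b * P y b y' else 0)
    (Pi1 : A × X → ℝ)
    (hPi1 : ∀ (a : A) (x : X), Pi1 (a, x) = ∑ y, Pi0 y * pol y a * P y a x)
    (Pi2 : X × A × X → ℝ)
    (hPi2 : ∀ (x : X) (a : A) (x' : X), Pi2 (x, a, x') = Pi0 x * pol x a * P x a x') :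
    ∀ h : ℕ, 1 ≤ h → ∀ (x : X) (a : A) (y : X),
      dTV (fun t : X × A × X => (P2 ^ (h + 1)) (x, a, y) t) Pi2
        ≤ dTV (fun s : A × X => (P1 ^ h) (a, y) s) Pi1 := by

  intro h _ x a y
  -- row sums of the kernel (pol, P)
  have hq : ∀ z : X, (∑ b, ∑ z', pol z b * P z b z') = 1 := by
    intro z
    have h1 : ∀ b : A, (∑ z', pol z b * P z b z') = pol z b := by
      intro b; rw [← Finset.mul_sum, (hP z b).2, mul_one]
    simp only [h1]; exact (hpol z).2
  -- marginal of Pi1 is Pi0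
  have hmarg : ∀ z : X, (∑ c, Pi1 (c, z)) = Pi0 z := by
    intro z
    simp only [hPi1]
    rw [Finset.sum_comm, ← hstat z]
    refine Finset.sum_congr rfl fun w _ => ?_
    rw [Finset.mul_sum]
    refine Finset.sum_congr rfl fun c _ => ?_
    ring
  -- key power formula
  have key : ∀ m : ℕ, ∀ z b z',
      (P2 ^ (m + 1)) (x, a, y) (z, b, z')
        = (∑ c, (P1 ^ m) (a, y) (c, z)) * (pol z b * P z b z') := by
    intro m
    induction m with
    | zero =>
      intro z b z'
      rw [zero_add, pow_one, hP2]
      simp only [pow_zero, Matrix.one_apply]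
      by_cases hz : z = y
      · subst hz
        rw [if_pos rfl]
        have h1 : (∑ c, if ((a : A), (z : X)) = (c, z) then (1:ℝ) else 0) = 1 := by
          rw [Finset.sum_eq_single a]
          · simp
          · intro c _ hc
            rw [if_neg]
            simp only [Prod.mk.injEq]
            exact fun hh => hc hh.1.symm
          · simp
        rw [h1, one_mul]
      · rw [if_neg hz]
        have h1 : (∑ c, if ((a : A), (y : X)) = (c, z) then (1:ℝ) else 0) = 0 := by
          refine Finset.sum_eq_zero fun c _ => ?_
          rw [if_neg]
          simp only [Prod.mk.injEq]
          exact fun hh => hz hh.2.symm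
        rw [h1, zero_mul]
    | succ m ih =>
      intro z b z'
      rw [pow_succ, Matrix.mul_apply]
      simp only [Fintype.sum_prod_type]
      simp only [ih, hP2]
      simp only [mul_ite, mul_zero, Finset.sum_ite_eq, Finset.mem_univ, if_true]
      have hr : ∀ c, (P1 ^ (m + 1)) (a, y) (c, z)
          = ∑ w, ∑ d, (P1 ^ m) (a, y) (d, w) * (pol w c * P w c z) := by
        intro c
        rw [pow_succ, Matrix.mul_apply, Fintype.sum_prod_type, Finset.sum_comm]
        exact Finset.sum_congr rfl fun w _ => Finset.sum_congr rfl fun d _ => by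
          rw [hP1]
      have h2 : (∑ c, (P1 ^ (m + 1)) (a, y) (c, z))
          = ∑ w, ∑ c, ((∑ d, (P1 ^ m) (a, y) (d, w)) * (pol w c * P w c z)) := by
        simp only [hr]
        rw [Finset.sum_comm]
        exact Finset.sum_congr rfl fun w _ => Finset.sum_congr rfl fun c _ =>
          (Finset.sum_mul _ _ _).symm
      rw [h2, Finset.sum_mul]
      exact Finset.sum_congr rfl fun w _ => (Finset.sum_mul _ _ _).symm
  -- compute the LHS sum
  have L : (∑ t : X × A × X, |(P2 ^ (h + 1)) (x, a, y) t - Pi2 t|)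
      = ∑ z, |(∑ c, (P1 ^ h) (a, y) (c, z)) - Pi0 z| := by
    simp only [Fintype.sum_prod_type]
    refine Finset.sum_congr rfl fun z _ => ?_
    have hterm : ∀ b z', |(P2 ^ (h + 1)) (x, a, y) (z, b, z') - Pi2 (z, b, z')|
        = |(∑ c, (P1 ^ h) (a, y) (c, z)) - Pi0 z| * (pol z b * P z b z') := by
      intro b z'
      rw [key h z b z', hPi2]
      have h2 : Pi0 z * pol z b * P z b z' = Pi0 z * (pol z b * P z b z') := by ring
      rw [h2, ← sub_mul, abs_mul,
        abs_of_nonneg (mul_nonneg ((hpol z).1 b) ((hP z b).1 z'))]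
    simp only [hterm, ← Finset.mul_sum]
    have h3 : (∑ i, pol z i * ∑ i1, P z i i1) = 1 := by
      have h4 : ∀ i, pol z i * (∑ i1, P z i i1) = pol z i := fun i => by
        rw [(hP z i).2, mul_one]
      simp only [h4]; exact (hpol z).2
    rw [h3, mul_one]
  -- compute the RHS sum
  have R : (∑ s : A × X, |(P1 ^ h) (a, y) s - Pi1 s|)
      = ∑ z, ∑ c, |(P1 ^ h) (a, y) (c, z) - Pi1 (c, z)| := by
    rw [Fintype.sum_prod_type, Finset.sum_comm]
  unfold dTV
  rw [L, R]
  have hle : (∑ z, |(∑ c, (P1 ^ h) (a, y) (c, z)) - Pi0 z|)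
      ≤ ∑ z, ∑ c, |(P1 ^ h) (a, y) (c, z) - Pi1 (c, z)| := by
    refine Finset.sum_le_sum fun z _ => ?_
    rw [← hmarg z, ← Finset.sum_sub_distrib]
    exact Finset.abs_sum_le_sum_abs _ _
  linarith
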